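/- arXiv:0807.1139 — 5 statements merged into one kernel-verified Lean document; each statement's English description precedes it below -/
import Mathlib

section
/- Let G = (L ∪ R, E) be a finite bipartite graph with edge weights w : E → ℝ≥0. Suppose M ⊆ E is a matching with the greedy domination property: every edge f ∈ E either belongs to M or shares an endpoint with some edge e ∈ M with w(e) ≥ w(f). Then for every matching M' ⊆ E, w(M') ≤ 2·w(M). (In particular, the matching produced by the greedy algorithm that processes edges in decreasing order of weight has weight at least half the weight of a maximum-weight matching.) -/
/-- **Greedy matching is a 2-approximation (bipartite, edge-weighted).**
A bipartite graph `G = (L ∪ R, E)` is modeled with edges `E : Finset (L × R)`,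
each edge `(l, r)` having its `L`-endpoint `l` and `R`-endpoint `r`, and
weights `w : L × R → ℝ≥0`.  If `M ⊆ E` is a matching with the greedy
domination property (every edge of `E` is in `M` or shares an endpoint with an
edge of `M` of at least its weight), then any matching `M' ⊆ E` has
`w(M') ≤ 2 · w(M)`. -/
theorem greedy_matching_two_approx {L R : Type*}
    (E : Finset (L × R)) (w : L × R → NNReal) (M : Finset (L × R))
    (hME : M ⊆ E)
    (hMmatch : ∀ e ∈ M, ∀ e' ∈ M, e ≠ e' → e.1 ≠ e'.1 ∧ e.2 ≠ e'.2)
    (hdom : ∀ f ∈ E, f ∈ M ∨ ∃ e ∈ M, (e.1 = f.1 ∨ e.2 = f.2) ∧ w f ≤ w e)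
    (M' : Finset (L × R)) (hM'E : M' ⊆ E)
    (hM'match : ∀ e ∈ M', ∀ e' ∈ M', e ≠ e' → e.1 ≠ e'.1 ∧ e.2 ≠ e'.2) :
    ∑ e ∈ M', w e ≤ 2 * ∑ e ∈ M, w e := by
  classical
  have hg : ∀ f ∈ M', ∃ e ∈ M, (e.1 = f.1 ∨ e.2 = f.2) ∧ w f ≤ w e := by
    intro f hf
    rcases hdom f (hM'E hf) with h | h
    · exact ⟨f, h, Or.inl rfl, le_rfl⟩
    · exact h
  choose! g hg1 hg2 hg3 using hg
  calc ∑ f ∈ M', w f ≤ ∑ f ∈ M', w (g f) := Finset.sum_le_sum hg3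
    _ = ∑ e ∈ M, ∑ f ∈ M'.filter (fun f => g f = e), w (g f) :=
        (Finset.sum_fiberwise_of_maps_to (fun f hf => hg1 f hf) _).symm
    _ ≤ ∑ e ∈ M, 2 * w e := by
        apply Finset.sum_le_sum
        intro e he
        have hsum : ∑ f ∈ M'.filter (fun f => g f = e), w (g f)
            = (M'.filter (fun f => g f = e)).card * w e := by
          rw [Finset.sum_congr rfl (fun f hf => by
            rw [(Finset.mem_filter.1 hf).2]), Finset.sum_const, nsmul_eq_mul]
        rw [hsum]
        have hcard : (M'.filter (fun f => g f = e)).card ≤ 2 := by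
          have : (M'.filter (fun f => g f = e)).card ≤ (Finset.univ : Finset Bool).card := by
            apply Finset.card_le_card_of_injOn (fun f => decide (f.1 = e.1))
            · intro f _; exact Finset.mem_univ _
            · intro f hf f' hf' hb
              by_contra hne
              obtain ⟨hf1, hf2⟩ := Finset.mem_filter.1 hf
              obtain ⟨hf'1, hf'2⟩ := Finset.mem_filter.1 hf'
              have hmm := hM'match f hf1 f' hf'1 hne
              by_cases h1 : f.1 = e.1
              · have h1' : f'.1 = e.1 := by
                  simp [h1] at hb; exact hb
                exact hmm.1 (h1.trans h1'.symm)
              · have h1' : ¬ f'.1 = e.1 := by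
                  simp [h1] at hb; exact hb
                have hf2' : f.2 = e.2 := by
                  rcases hg2 f hf1 with h | h
                  · rw [hf2] at h; exact absurd h.symm h1
                  · rw [hf2] at h; exact h.symm
                have hf'2' : f'.2 = e.2 := by
                  rcases hg2 f' hf'1 with h | h
                  · rw [hf'2] at h; exact absurd h.symm h1'
                  · rw [hf'2] at h; exact h.symm
                exact hmm.2 (hf2'.trans hf'2'.symm)
          simpa using this
        calc ((M'.filter (fun f => g f = e)).card : NNReal) * w e
            ≤ (2 : ℕ) * w e := by
              exact mul_le_mul_of_nonneg_right (by exact_mod_cast hcard) zero_le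
          _ = 2 * w e := by norm_num
    _ = 2 * ∑ e ∈ M, w e := (Finset.mul_sum _ _ _).symm
end

section
/- Let H be a finite hypergraph whose edges are nonempty sets of vertices each of cardinality at most d + 1, with edge weights w : E → ℝ≥0. Suppose M ⊆ E is a set of pairwise disjoint edges with the greedy domination property: every edge f ∈ E either belongs to M or intersects some edge e ∈ M with w(e) ≥ w(f). Then for every set M' ⊆ E of pairwise disjoint edges, w(M') ≤ (d+1)·w(M). (In particular, the greedy algorithm that processes hyperedges in decreasing order of weight returns a (d+1)-approximation to the maximum-weight disjoint edge set.) -/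
/-- **Greedy is a (d+1)-approximation for max-weight disjoint edge sets in
hypergraphs with edges of size at most `d+1`.**  A hypergraph on vertex type
`V` has edges `E : Finset (Finset V)`, each nonempty of cardinality at most
`d + 1`, with weights `w : Finset V → ℝ≥0`.  If `M ⊆ E` is a set of pairwise
disjoint edges with the greedy domination property, then any set `M' ⊆ E` of
pairwise disjoint edges satisfies `w(M') ≤ (d+1) · w(M)`. -/
theorem greedy_hypergraph_approx {V : Type*} [DecidableEq V] (d : ℕ)
    (E : Finset (Finset V)) (w : Finset V → NNReal)
    (hE : ∀ e ∈ E, e.Nonempty ∧ e.card ≤ d + 1)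
    (M : Finset (Finset V)) (hME : M ⊆ E)
    (hMdisj : ∀ e ∈ M, ∀ e' ∈ M, e ≠ e' → Disjoint e e')
    (hdom : ∀ f ∈ E, f ∈ M ∨ ∃ e ∈ M, ¬ Disjoint e f ∧ w f ≤ w e)
    (M' : Finset (Finset V)) (hM'E : M' ⊆ E)
    (hM'disj : ∀ e ∈ M', ∀ e' ∈ M', e ≠ e' → Disjoint e e') :
    ∑ e ∈ M', w e ≤ ((d : NNReal) + 1) * ∑ e ∈ M, w e := by
  classical
  have key : ∀ f ∈ M', ∃ e ∈ M, ¬ Disjoint e f ∧ w f ≤ w e := by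
    intro f hf
    rcases hdom f (hM'E hf) with hfM | h
    · refine ⟨f, hfM, ?_, le_rfl⟩
      have hne := (hE f (hM'E hf)).1
      simp [Finset.disjoint_self_iff_empty, Finset.nonempty_iff_ne_empty.mp hne]
    · exact h
  choose! c hcM hcint hcw using key
  have maps : ∀ f ∈ M', c f ∈ M := hcM
  calc ∑ e ∈ M', w e ≤ ∑ f ∈ M', w (c f) :=
        Finset.sum_le_sum fun f hf => hcw f hf
    _ = ∑ e ∈ M, ∑ f ∈ M'.filter (fun f => c f = e), w (c f) :=
        (Finset.sum_fiberwise_of_maps_to maps _).symm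
    _ ≤ ∑ e ∈ M, ((d : NNReal) + 1) * w e := by
        refine Finset.sum_le_sum fun e he => ?_
        have heq : ∑ f ∈ M'.filter (fun f => c f = e), w (c f)
            = (M'.filter (fun f => c f = e)).card • w e := by
          rw [Finset.sum_congr rfl fun f hf => by
            rw [(Finset.mem_filter.mp hf).2], Finset.sum_const]
        rw [heq]
        have hcard : (M'.filter (fun f => c f = e)).card ≤ d + 1 := by
          have hinj : ∀ f ∈ M'.filter (fun f => c f = e),
              ∃ v ∈ e, v ∈ f := by
            intro f hf
            obtain ⟨hf', hce⟩ := Finset.mem_filter.mp hf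
            have := hcint f hf'
            rw [hce] at this
            rw [Finset.not_disjoint_iff] at this
            obtain ⟨v, hv1, hv2⟩ := this
            exact ⟨v, hv1, hv2⟩
          haveI : Nonempty V := ⟨(hE e (hME he)).1.choose⟩
          choose! vfun hv1 hv2 using hinj
          have : (M'.filter (fun f => c f = e)).card ≤ e.card := by
            apply Finset.card_le_card_of_injOn vfun
            · intro f hf; exact hv1 f hf
            · intro f hf g hg hfg
              by_contra hne
              have hd := hM'disj f (Finset.mem_of_mem_filter f hf)
                g (Finset.mem_of_mem_filter g hg) hne
              exact (Finset.disjoint_left.mp hd (hv2 f hf)) (hfg ▸ hv2 g hg)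
          exact this.trans (hE e (hME he)).2
        calc (M'.filter (fun f => c f = e)).card • w e
            = ((M'.filter (fun f => c f = e)).card : NNReal) * w e := by
              rw [nsmul_eq_mul]
          _ ≤ ((d : NNReal) + 1) * w e := by
              apply mul_le_mul_left
              have : ((M'.filter (fun f => c f = e)).card : NNReal)
                  ≤ ((d + 1 : ℕ) : NNReal) := Nat.cast_le.mpr hcard
              simpa using this
    _ = ((d : NNReal) + 1) * ∑ e ∈ M, w e := by rw [Finset.mul_sum]
end

section
/- Let p ∈ (0, 1) and let (P_i)_{i≥1} and (a_i)_{i≥1} be sequences of nonnegative reals such that P_{i+1} ≤ (1−p)·P_i for all i ≥ 1, and (a_i) is nonincreasing. Then both series ∑_{i=1}^∞ P_i·a_i and ∑_{i=1}^∞ i·P_i·a_i converge, and ∑_{i=1}^∞ P_i·a_i ≥ p · ∑_{i=1}^∞ i·P_i·a_i. (Equivalently, for nonnegative sequences (P_i), (w_i) with P_i ≤ (1−p)P_{i−1} and w_i ≤ (i/(i−1))·w_{i−1} for all i ≥ 2, one has ∑_{i≥1} P_i·w_i/i ≥ p·∑_{i≥1} P_i·w_i.) -/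
/-- **Key analytic inequality for the tighter pruning analysis.**  Let
`p ∈ (0,1)` and let `(P i)` and `(a i)` (indexed here by `ℕ`, with index `n`
standing for the `(n+1)`-st term) be nonnegative sequences with
`P (n+1) ≤ (1 − p) · P n` and `(a n)` nonincreasing.  Then the series
`∑ P_i · a_i` and `∑ i · P_i · a_i` both converge, and
`∑ P_i · a_i ≥ p · ∑ i · P_i · a_i`. -/
theorem geometric_decay_price_inequality (p : ℝ) (hp : p ∈ Set.Ioo (0 : ℝ) 1)
    (P a : ℕ → ℝ) (hP0 : ∀ n, 0 ≤ P n) (ha0 : ∀ n, 0 ≤ a n)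
    (hPdec : ∀ n, P (n + 1) ≤ (1 - p) * P n)
    (hadec : ∀ n, a (n + 1) ≤ a n) :
    Summable (fun n : ℕ => P n * a n) ∧
    Summable (fun n : ℕ => ((n : ℝ) + 1) * P n * a n) ∧
    p * ∑' n : ℕ, ((n : ℝ) + 1) * P n * a n ≤ ∑' n, P n * a n := by
  obtain ⟨hp0, hp1⟩ := hp
  set q : ℝ := 1 - p with hq
  have hq0 : 0 ≤ q := by simp [hq]; linarith
  have hq1 : q < 1 := by simp [hq]; linarith
  set f : ℕ → ℝ := fun n => P n * a n with hf
  have hf0 : ∀ n, 0 ≤ f n := fun n => mul_nonneg (hP0 n) (ha0 n)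
  -- geometric decay of the tails
  have hgeo : ∀ k j, f (k + j) ≤ q ^ j * f k := by
    intro k j
    induction j with
    | zero => simp
    | succ j ih =>
      have h1 : P (k + j + 1) ≤ q * P (k + j) := hPdec _
      have h2 : a (k + j + 1) ≤ a (k + j) := hadec _
      have hstep : f (k + (j + 1)) ≤ q * f (k + j) := by
        have : P (k + j + 1) * a (k + j + 1) ≤ (q * P (k + j)) * a (k + j) :=
          mul_le_mul h1 h2 (ha0 _) (mul_nonneg hq0 (hP0 _))
        simpa [hf, show k + (j + 1) = k + j + 1 from rfl, mul_assoc] using this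
      calc f (k + (j + 1)) ≤ q * f (k + j) := hstep
        _ ≤ q * (q ^ j * f k) := mul_le_mul_of_nonneg_left ih hq0
        _ = q ^ (j + 1) * f k := by ring
  have hgeo0 : ∀ n, f n ≤ q ^ n * f 0 := by
    intro n; simpa using hgeo 0 n
  have hgsum : Summable fun n : ℕ => q ^ n := summable_geometric_of_lt_one hq0 hq1
  have hS0 : Summable f :=
    Summable.of_nonneg_of_le hf0 hgeo0 (hgsum.mul_right (f 0))
  have hS1 : Summable fun n : ℕ => ((n : ℝ) + 1) * f n := by
    have hnq : Summable fun n : ℕ => (n : ℝ) ^ 1 * q ^ n :=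
      summable_pow_mul_geometric_of_norm_lt_one 1
        (by rwa [Real.norm_eq_abs, abs_of_nonneg hq0])
    have hbd : Summable fun n : ℕ => ((n : ℝ) ^ 1 * q ^ n + q ^ n) * f 0 :=
      (hnq.add hgsum).mul_right (f 0)
    refine Summable.of_nonneg_of_le
      (fun n => mul_nonneg (by positivity) (hf0 n)) (fun n => ?_) hbd
    have := mul_le_mul_of_nonneg_left (hgeo0 n)
      (show (0:ℝ) ≤ (n : ℝ) + 1 by positivity)
    calc ((n : ℝ) + 1) * f n ≤ ((n : ℝ) + 1) * (q ^ n * f 0) := this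
      _ = ((n : ℝ) ^ 1 * q ^ n + q ^ n) * f 0 := by ring
  -- tail sums
  have hTs : ∀ k, Summable fun j : ℕ => f (k + j) := by
    intro k
    exact Summable.of_nonneg_of_le (fun j => hf0 _) (hgeo k) (hgsum.mul_right (f k))
  have hTle : ∀ k, p * ∑' j : ℕ, f (k + j) ≤ f k := by
    intro k
    have h1 : ∑' j : ℕ, f (k + j) ≤ ∑' j : ℕ, q ^ j * f k :=
      Summable.tsum_le_tsum (hgeo k) (hTs k) (hgsum.mul_right (f k))
    have h2 : ∑' j : ℕ, q ^ j * f k = p⁻¹ * f k := by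
      rw [tsum_mul_right, tsum_geometric_of_lt_one hq0 hq1]
      simp [hq]
    have := mul_le_mul_of_nonneg_left (h1.trans h2.le) hp0.le
    calc p * ∑' j : ℕ, f (k + j) ≤ p * (p⁻¹ * f k) := this
      _ = f k := by field_simp
  -- key finite inequality
  have key : ∀ N : ℕ, p * ∑ n ∈ Finset.range N, ((n : ℝ) + 1) * f n ≤ ∑' n, f n := by
    intro N
    have swap : ∑ n ∈ Finset.range N, ((n : ℝ) + 1) * f n
        = ∑ k ∈ Finset.range N, ∑ n ∈ Finset.Ico k N, f n := by
      have := Finset.sum_Ico_Ico_comm 0 N (fun _ n => f n)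
      simp only [Finset.range_eq_Ico] at *
      rw [this]
      refine Finset.sum_congr rfl fun n _ => ?_
      rw [Finset.sum_const, Nat.card_Ico]
      push_cast [Nat.sub_zero]
      ring
    have step1 : ∀ k, p * ∑ n ∈ Finset.Ico k N, f n ≤ f k := by
      intro k
      have : ∑ n ∈ Finset.Ico k N, f n ≤ ∑' j : ℕ, f (k + j) := by
        rw [Finset.sum_Ico_eq_sum_range]
        exact Summable.sum_le_tsum _ (fun j _ => hf0 _) (hTs k)
      exact le_trans (mul_le_mul_of_nonneg_left this hp0.le) (hTle k)
    calc p * ∑ n ∈ Finset.range N, ((n : ℝ) + 1) * f n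
        = ∑ k ∈ Finset.range N, p * ∑ n ∈ Finset.Ico k N, f n := by
          rw [swap, Finset.mul_sum]
      _ ≤ ∑ k ∈ Finset.range N, f k := Finset.sum_le_sum fun k _ => step1 k
      _ ≤ ∑' n, f n := Summable.sum_le_tsum _ (fun n _ => hf0 n) hS0
  refine ⟨hS0, by simpa [mul_assoc] using hS1, ?_⟩
  have hlim := (hS1.hasSum.tendsto_sum_nat).const_mul p
  have hfin : p * ∑' n : ℕ, ((n : ℝ) + 1) * f n ≤ ∑' n, f n :=
    le_of_tendsto hlim (Filter.Eventually.of_forall key)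
  simpa [mul_assoc] using hfin
end

section
/- Let G = (L ∪ R, E) be a finite bipartite graph with edge weights w : E → ℝ≥0 and let p ∈ [0, 1]. For S ⊆ L, let E_S denote the set of edges whose L-endpoint lies in S, and suppose M_S ⊆ E_S is a matching with the greedy domination property relative to E_S: every edge f ∈ E_S either belongs to M_S or shares an endpoint with some e ∈ M_S with w(e) ≥ w(f). Then ∑_{S ⊆ L} p^{|S|} (1−p)^{|L|−|S|} · w(M_S) ≥ (p/2) · ν(L), where ν(L) is the maximum weight of a matching in G. (That is, if each vertex of L is sampled independently with probability p and a greedy matching is built on the sampled side, its expected weight is at least p·OPT/2.) -/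
open Finset

lemma binom_sum {L : Type*} [DecidableEq L] (s : Finset L) (p q : ℝ) :
    ∑ T ∈ s.powerset, p ^ T.card * q ^ (s.card - T.card) = (p + q) ^ s.card := by
  rw [← Finset.prod_const, Finset.prod_add]
  refine Finset.sum_congr rfl fun T hT => ?_
  rw [Finset.prod_const, Finset.prod_const, Finset.card_sdiff_of_subset (Finset.mem_powerset.mp hT)]

lemma single_sum {L : Type*} [Fintype L] [DecidableEq L] (l : L) (p : ℝ) :
    ∑ S : Finset L,
      (if l ∈ S then p ^ S.card * (1 - p) ^ (Fintype.card L - S.card) else 0) = p := by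
  have huniv : (Finset.univ : Finset L) = insert l (Finset.univ.erase l) := by
    simp [Finset.insert_erase (Finset.mem_univ l)]
  have hl : l ∉ Finset.univ.erase l := Finset.notMem_erase _ _
  have hn : Fintype.card L = (Finset.univ.erase l).card + 1 := by
    rw [Finset.card_erase_of_mem (Finset.mem_univ l), Finset.card_univ]
    have : 0 < Fintype.card L := Fintype.card_pos_iff.mpr ⟨l⟩
    omega
  calc ∑ S : Finset L,
      (if l ∈ S then p ^ S.card * (1 - p) ^ (Fintype.card L - S.card) else 0)
      = ∑ S ∈ (Finset.univ : Finset L).powerset,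
        (if l ∈ S then p ^ S.card * (1 - p) ^ (Fintype.card L - S.card) else 0) := by
        rw [Finset.powerset_univ]
    _ = ∑ S ∈ (insert l (Finset.univ.erase l)).powerset,
        (if l ∈ S then p ^ S.card * (1 - p) ^ (Fintype.card L - S.card) else 0) := by
        rw [← huniv]
    _ = p := by
        rw [Finset.sum_powerset_insert hl]
        have h1 : ∑ T ∈ (Finset.univ.erase l).powerset,
            (if l ∈ T then p ^ T.card * (1 - p) ^ (Fintype.card L - T.card) else 0) = 0 := by
          refine Finset.sum_eq_zero fun T hT => ?_
          have : l ∉ T := fun h => hl (Finset.mem_powerset.mp hT h)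
          simp [this]
        rw [h1, zero_add]
        have h2 : ∀ T ∈ (Finset.univ.erase l).powerset,
            (if l ∈ insert l T then
              p ^ (insert l T).card * (1 - p) ^ (Fintype.card L - (insert l T).card) else 0)
            = p * (p ^ T.card * (1 - p) ^ ((Finset.univ.erase l).card - T.card)) := by
          intro T hT
          have hlT : l ∉ T := fun h => hl (Finset.mem_powerset.mp hT h)
          have hcard : (insert l T).card = T.card + 1 := Finset.card_insert_of_notMem hlT
          have hTle : T.card ≤ (Finset.univ.erase l).card :=
            Finset.card_le_card (Finset.mem_powerset.mp hT)
          have : Fintype.card L - (T.card + 1) = (Finset.univ.erase l).card - T.card := by omega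
          rw [if_pos (Finset.mem_insert_self l T), hcard, this]
          ring
        rw [Finset.sum_congr rfl h2, ← Finset.mul_sum, binom_sum]
        norm_num

/-- **Expected weight of the greedy matching on a `p`-sample of `L` is at
least `p · OPT / 2`.**  A bipartite graph `G = (L ∪ R, E)` is modeled with
edges `E : Finset (L × R)` and weights `w : L × R → ℝ≥0`.  For every
`S ⊆ L`, `M S ⊆ E` is a matching using only edges with `L`-endpoint in `S`
and satisfying the greedy domination property relative to those edges.
With `ν` the maximum weight of a matching in `G` (characterized by
`IsGreatest`), we have
`∑_{S ⊆ L} p^|S| (1−p)^{|L|−|S|} · w(M S) ≥ (p/2) · ν`. -/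
theorem sampled_greedy_matching_expectation {L R : Type*} [Fintype L] [Fintype R]
    [DecidableEq L]
    (E : Finset (L × R)) (w : L × R → NNReal)
    (p : ℝ) (hp0 : 0 ≤ p) (hp1 : p ≤ 1)
    (M : Finset L → Finset (L × R))
    (hME : ∀ S, M S ⊆ E)
    (hMS : ∀ S, ∀ e ∈ M S, e.1 ∈ S)
    (hMmatch : ∀ S, ∀ e ∈ M S, ∀ e' ∈ M S, e ≠ e' → e.1 ≠ e'.1 ∧ e.2 ≠ e'.2)
    (hdom : ∀ S : Finset L, ∀ f ∈ E, f.1 ∈ S →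
      f ∈ M S ∨ ∃ e ∈ M S, (e.1 = f.1 ∨ e.2 = f.2) ∧ w f ≤ w e)
    (ν : NNReal)
    (hν : IsGreatest {x : NNReal | ∃ N ⊆ E,
      (∀ e ∈ N, ∀ e' ∈ N, e ≠ e' → e.1 ≠ e'.1 ∧ e.2 ≠ e'.2) ∧
      x = ∑ e ∈ N, w e} ν) :
    p / 2 * (ν : ℝ) ≤
      ∑ S : Finset L,
        p ^ S.card * (1 - p) ^ (Fintype.card L - S.card) *
          ((∑ e ∈ M S, w e : NNReal) : ℝ) := by
  classical
  obtain ⟨N, hNE, hNmatch, hNsum⟩ := hν.1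
  set n := Fintype.card L
  have hcoef0 : ∀ S : Finset L, 0 ≤ p ^ S.card * (1 - p) ^ (n - S.card) := fun S =>
    mul_nonneg (pow_nonneg hp0 _) (pow_nonneg (by linarith) _)
  -- Pointwise charging lemma
  have keyA : ∀ S : Finset L,
      ∑ f ∈ N.filter (fun f => f.1 ∈ S), (w f : ℝ) ≤ 2 * ∑ e ∈ M S, (w e : ℝ) := by
    intro S
    set F := N.filter (fun f => f.1 ∈ S) with hF
    have hch : ∀ f ∈ F, ∃ e ∈ M S, (e.1 = f.1 ∨ e.2 = f.2) ∧ w f ≤ w e := by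
      intro f hf
      rw [hF, Finset.mem_filter] at hf
      rcases hdom S f (hNE hf.1) hf.2 with h | h
      · exact ⟨f, h, Or.inl rfl, le_refl _⟩
      · exact h
    choose! g hg1 hg2 hg3 using hch
    have step3 : ∀ e ∈ M S,
        ∑ f ∈ F.filter (fun f => g f = e), (w (g f) : ℝ) ≤ 2 * (w e : ℝ) := by
      intro e he
      have hsum : ∑ f ∈ F.filter (fun f => g f = e), (w (g f) : ℝ)
          = (F.filter (fun f => g f = e)).card * (w e : ℝ) := by
        rw [Finset.sum_congr rfl (fun f hf => ?_), Finset.sum_const, nsmul_eq_mul]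
        rw [(Finset.mem_filter.mp hf).2]
      have hcard : (F.filter (fun f => g f = e)).card ≤ 2 := by
        have hsub : F.filter (fun f => g f = e) ⊆
            F.filter (fun f => f.1 = e.1) ∪ F.filter (fun f => f.2 = e.2) := by
          intro f hf
          obtain ⟨hfF, hfe⟩ := Finset.mem_filter.mp hf
          rcases hg2 f hfF with h | h
          · exact Finset.mem_union_left _
              (Finset.mem_filter.mpr ⟨hfF, by rw [← hfe]; exact h.symm⟩)
          · exact Finset.mem_union_right _
              (Finset.mem_filter.mpr ⟨hfF, by rw [← hfe]; exact h.symm⟩)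
        have h1 : (F.filter (fun f => f.1 = e.1)).card ≤ 1 := by
          refine Finset.card_le_one.mpr fun a ha b hb => ?_
          obtain ⟨haF, ha1⟩ := Finset.mem_filter.mp ha
          obtain ⟨hbF, hb1⟩ := Finset.mem_filter.mp hb
          by_contra hne
          exact (hNmatch a (Finset.mem_filter.mp haF).1 b (Finset.mem_filter.mp hbF).1 hne).1
            (ha1.trans hb1.symm)
        have h2 : (F.filter (fun f => f.2 = e.2)).card ≤ 1 := by
          refine Finset.card_le_one.mpr fun a ha b hb => ?_
          obtain ⟨haF, ha1⟩ := Finset.mem_filter.mp ha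
          obtain ⟨hbF, hb1⟩ := Finset.mem_filter.mp hb
          by_contra hne
          exact (hNmatch a (Finset.mem_filter.mp haF).1 b (Finset.mem_filter.mp hbF).1 hne).2
            (ha1.trans hb1.symm)
        calc (F.filter (fun f => g f = e)).card
            ≤ (F.filter (fun f => f.1 = e.1) ∪ F.filter (fun f => f.2 = e.2)).card :=
              Finset.card_le_card hsub
          _ ≤ _ + _ := Finset.card_union_le _ _
          _ ≤ 2 := by omega
      rw [hsum]
      have hw : (0:ℝ) ≤ (w e : ℝ) := (w e).coe_nonneg
      have : ((F.filter (fun f => g f = e)).card : ℝ) ≤ 2 := by exact_mod_cast hcard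
      nlinarith
    calc ∑ f ∈ F, (w f : ℝ) ≤ ∑ f ∈ F, (w (g f) : ℝ) := by
          refine Finset.sum_le_sum fun f hf => ?_
          exact_mod_cast hg3 f hf
      _ = ∑ e ∈ M S, ∑ f ∈ F.filter (fun f => g f = e), (w (g f) : ℝ) :=
          (Finset.sum_fiberwise_of_maps_to hg1 _).symm
      _ ≤ ∑ e ∈ M S, 2 * (w e : ℝ) := Finset.sum_le_sum step3
      _ = 2 * ∑ e ∈ M S, (w e : ℝ) := (Finset.mul_sum _ _ _).symm
  -- Expectation lemma
  have keyB : ∑ S : Finset L,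
      p ^ S.card * (1 - p) ^ (n - S.card) * ∑ f ∈ N.filter (fun f => f.1 ∈ S), (w f : ℝ)
      = p * ∑ f ∈ N, (w f : ℝ) := by
    have hstep : ∀ S : Finset L,
        p ^ S.card * (1 - p) ^ (n - S.card) * ∑ f ∈ N.filter (fun f => f.1 ∈ S), (w f : ℝ)
        = ∑ f ∈ N,
          (if f.1 ∈ S then p ^ S.card * (1 - p) ^ (n - S.card) else 0) * (w f : ℝ) := by
      intro S
      rw [Finset.sum_filter, Finset.mul_sum]
      refine Finset.sum_congr rfl fun f _ => ?_
      by_cases h : f.1 ∈ S <;> simp [h]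
    rw [Finset.sum_congr rfl fun S _ => hstep S, Finset.sum_comm, Finset.mul_sum]
    refine Finset.sum_congr rfl fun f _ => ?_
    rw [← Finset.sum_mul]
    congr 1
    exact single_sum f.1 p
  have hν' : (ν : ℝ) = ∑ f ∈ N, (w f : ℝ) := by rw [hNsum]; push_cast; rfl
  calc p / 2 * (ν : ℝ)
      = (1/2) * (p * ∑ f ∈ N, (w f : ℝ)) := by rw [hν']; ring
    _ = ∑ S : Finset L, p ^ S.card * (1 - p) ^ (n - S.card) *
          ((1/2) * ∑ f ∈ N.filter (fun f => f.1 ∈ S), (w f : ℝ)) := by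
        rw [← keyB, Finset.mul_sum]
        refine Finset.sum_congr rfl fun S _ => ?_; ring
    _ ≤ ∑ S : Finset L, p ^ S.card * (1 - p) ^ (n - S.card) *
          ((∑ e ∈ M S, w e : NNReal) : ℝ) := by
        refine Finset.sum_le_sum fun S _ => ?_
        refine mul_le_mul_of_nonneg_left ?_ (hcoef0 S)
        have h := keyA S
        have hMsum : ((∑ e ∈ M S, w e : NNReal) : ℝ) = ∑ e ∈ M S, (w e : ℝ) := by
          push_cast; rfl
        rw [hMsum]; linarith
end

section
/- Let H be a finite hypergraph with vertex set L ∪ R whose every edge contains exactly one vertex of L and at most d vertices of R, with edge weights w : E → ℝ≥0, and let p ∈ [0, 1]. For S ⊆ L, let E_S denote the set of edges whose L-vertex lies in S, and suppose M_S ⊆ E_S is a set of pairwise disjoint edges with the greedy domination property relative to E_S: every edge f ∈ E_S either belongs to M_S or intersects some e ∈ M_S with w(e) ≥ w(f). Then ∑_{S ⊆ L} p^{|S|} (1−p)^{|L|−|S|} · w(M_S) ≥ (p/(d+1)) · ν(L), where ν(L) is the maximum weight of a set of pairwise disjoint edges of H. -/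
open Finset

lemma aux_powerset_sum {α : Type*} [DecidableEq α] (s : Finset α) (p q : ℝ) :
    ∑ t ∈ s.powerset, p ^ t.card * q ^ (s.card - t.card) = (p + q) ^ s.card := by
  induction s using Finset.induction_on with
  | empty => simp
  | insert a s ha ih =>
    rw [Finset.sum_powerset_insert ha, card_insert_of_notMem ha]
    have h1 : ∑ t ∈ s.powerset, p ^ t.card * q ^ (s.card + 1 - t.card)
        = (∑ t ∈ s.powerset, p ^ t.card * q ^ (s.card - t.card)) * q := by
      rw [Finset.sum_mul]
      refine Finset.sum_congr rfl fun t ht => ?_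
      have htc : t.card ≤ s.card := card_le_card (mem_powerset.1 ht)
      have : s.card + 1 - t.card = (s.card - t.card) + 1 := by omega
      rw [this, pow_succ]; ring
    have h2 : ∑ t ∈ s.powerset, p ^ (insert a t).card * q ^ (s.card + 1 - (insert a t).card)
        = (∑ t ∈ s.powerset, p ^ t.card * q ^ (s.card - t.card)) * p := by
      rw [Finset.sum_mul]
      refine Finset.sum_congr rfl fun t ht => ?_
      have hat : a ∉ t := fun h => ha (mem_powerset.1 ht h)
      have htc : t.card ≤ s.card := card_le_card (mem_powerset.1 ht)
      rw [card_insert_of_notMem hat]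
      have : s.card + 1 - (t.card + 1) = s.card - t.card := by omega
      rw [this, pow_succ]; ring
    rw [h1, h2, ih, pow_succ]; ring

lemma aux_cond_sum {L : Type*} [Fintype L] [DecidableEq L] (a : L) (p : ℝ) :
    ∑ S : Finset L, (if a ∈ S then p ^ S.card * (1 - p) ^ (Fintype.card L - S.card) else 0)
      = p := by
  classical
  have huniv : (Finset.univ : Finset L) = insert a (Finset.univ.erase a) :=
    (insert_erase (mem_univ a)).symm
  have hcard : Fintype.card L = (Finset.univ.erase a).card + 1 := by
    have := card_erase_of_mem (mem_univ a)
    have hpos : 0 < Fintype.card L := Fintype.card_pos_iff.2 ⟨a⟩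
    simp only [Finset.card_univ] at this
    omega
  have : ∑ S : Finset L, (if a ∈ S then p ^ S.card * (1 - p) ^ (Fintype.card L - S.card) else 0)
      = ∑ S ∈ (Finset.univ : Finset L).powerset,
        (if a ∈ S then p ^ S.card * (1 - p) ^ (Fintype.card L - S.card) else 0) := by
    rw [Finset.powerset_univ]
  rw [this, huniv, Finset.sum_powerset_insert (notMem_erase a _)]
  have h1 : ∑ t ∈ (Finset.univ.erase a).powerset,
      (if a ∈ t then p ^ t.card * (1 - p) ^ (Fintype.card L - t.card) else 0) = 0 := by
    refine Finset.sum_eq_zero fun t ht => ?_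
    have : a ∉ t := fun h => (notMem_erase a _) (mem_powerset.1 ht h)
    simp [this]
  rw [h1, zero_add]
  have h2 : ∑ t ∈ (Finset.univ.erase a).powerset,
      (if a ∈ insert a t then p ^ (insert a t).card * (1 - p) ^ (Fintype.card L - (insert a t).card) else 0)
      = p * ∑ t ∈ (Finset.univ.erase a).powerset,
          p ^ t.card * (1 - p) ^ ((Finset.univ.erase a).card - t.card) := by
    rw [Finset.mul_sum]
    refine Finset.sum_congr rfl fun t ht => ?_
    have hat : a ∉ t := fun h => (notMem_erase a _) (mem_powerset.1 ht h)
    have htc : t.card ≤ (Finset.univ.erase a).card := card_le_card (mem_powerset.1 ht)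
    rw [if_pos (mem_insert_self a t), card_insert_of_notMem hat]
    have : Fintype.card L - (t.card + 1) = (Finset.univ.erase a).card - t.card := by omega
    rw [this, pow_succ]; ring
  rw [h2, aux_powerset_sum]
  have : p + (1 - p) = 1 := by ring
  rw [this, one_pow, mul_one]

/-- **Expected weight of the greedy independent edge set on a `p`-sample of
`L` is at least `p · OPT / (d+1)` (HVM setting).**  A hypergraph on vertex
set `L ∪ R` whose every edge has exactly one vertex in `L` and at most `d`
vertices in `R` is modeled with edges `E : Finset (L × Finset R)`: an edge
`(l, T)` consists of its `L`-vertex `l` and its set `T` of `R`-vertices,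
`|T| ≤ d`.  Two edges intersect iff they share their `L`-vertex or their
`R`-vertex sets intersect.  For every `S ⊆ L`, `M S ⊆ E` is a set of
pairwise disjoint edges with `L`-vertex in `S` satisfying the greedy
domination property relative to those edges.  With `ν` the maximum weight of
a set of pairwise disjoint edges of the hypergraph (characterized by
`IsGreatest`), we have
`∑_{S ⊆ L} p^|S| (1−p)^{|L|−|S|} · w(M S) ≥ (p/(d+1)) · ν`. -/
theorem sampled_greedy_hypergraph_expectation {L R : Type*} [Fintype L] [Fintype R]
    [DecidableEq L] [DecidableEq R] (d : ℕ)
    (E : Finset (L × Finset R)) (w : L × Finset R → NNReal)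
    (hE : ∀ e ∈ E, e.2.card ≤ d)
    (p : ℝ) (hp0 : 0 ≤ p) (hp1 : p ≤ 1)
    (M : Finset L → Finset (L × Finset R))
    (hME : ∀ S, M S ⊆ E)
    (hMS : ∀ S, ∀ e ∈ M S, e.1 ∈ S)
    (hMind : ∀ S, ∀ e ∈ M S, ∀ e' ∈ M S, e ≠ e' → e.1 ≠ e'.1 ∧ Disjoint e.2 e'.2)
    (hdom : ∀ S : Finset L, ∀ f ∈ E, f.1 ∈ S →
      f ∈ M S ∨ ∃ e ∈ M S, (e.1 = f.1 ∨ ¬ Disjoint e.2 f.2) ∧ w f ≤ w e)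
    (ν : NNReal)
    (hν : IsGreatest {x : NNReal | ∃ N ⊆ E,
      (∀ e ∈ N, ∀ e' ∈ N, e ≠ e' → e.1 ≠ e'.1 ∧ Disjoint e.2 e'.2) ∧
      x = ∑ e ∈ N, w e} ν) :
    p / (d + 1) * (ν : ℝ) ≤
      ∑ S : Finset L,
        p ^ S.card * (1 - p) ^ (Fintype.card L - S.card) *
          ((∑ e ∈ M S, w e : NNReal) : ℝ) := by
  classical
  obtain ⟨N, hNE, hNind, hNw⟩ := hν.1
  -- deterministic charging lemma
  have det : ∀ S : Finset L,
      (∑ f ∈ N.filter (fun f => f.1 ∈ S), (w f : ℝ)) ≤ (d + 1) * ∑ e ∈ M S, (w e : ℝ) := by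
    intro S
    set A := N.filter (fun f => f.1 ∈ S) with hA
    have hex : ∀ f : L × Finset R, ∃ e, f ∈ A →
        e ∈ M S ∧ (e.1 = f.1 ∨ ¬ Disjoint e.2 f.2) ∧ w f ≤ w e := by
      intro f
      by_cases hf : f ∈ A
      · obtain ⟨hfN, hfS⟩ := Finset.mem_filter.1 hf
        rcases hdom S f (hNE hfN) hfS with hM | ⟨e, he, hint, hwe⟩
        · exact ⟨f, fun _ => ⟨hM, Or.inl rfl, le_rfl⟩⟩
        · exact ⟨e, fun _ => ⟨he, hint, hwe⟩⟩
      · exact ⟨f, fun h => absurd h hf⟩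
    choose c hc using hex
    have h1 : (∑ f ∈ A, (w f : ℝ)) ≤ ∑ f ∈ A, (w (c f) : ℝ) := by
      refine Finset.sum_le_sum fun f hf => ?_
      exact_mod_cast (hc f hf).2.2
    have h2 : ∑ f ∈ A, (w (c f) : ℝ)
        = ∑ e ∈ M S, ∑ f ∈ A.filter (fun f => c f = e), (w (c f) : ℝ) :=
      (Finset.sum_fiberwise_of_maps_to (fun f hf => (hc f hf).1) _).symm
    have h3 : ∀ e ∈ M S, ∑ f ∈ A.filter (fun f => c f = e), (w (c f) : ℝ)
        ≤ (d + 1) * (w e : ℝ) := by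
      intro e heM
      set F := A.filter (fun f => c f = e) with hF
      have hsum : ∑ f ∈ F, (w (c f) : ℝ) = F.card * (w e : ℝ) := by
        rw [Finset.sum_congr rfl (fun f hf => by
          rw [(Finset.mem_filter.1 hf).2]), Finset.sum_const, nsmul_eq_mul]
      -- bound fiber cardinality
      have hmap : ∀ f : L × Finset R, ∃ x : Option R, f ∈ F →
          (x = none ∧ e.1 = f.1) ∨ ∃ r, x = some r ∧ r ∈ e.2 ∧ r ∈ f.2 := by
        intro f
        by_cases hf : f ∈ F
        · obtain ⟨hfA, hcf⟩ := Finset.mem_filter.1 hf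
          rcases (hc f hfA).2.1 with h | h
          · rw [hcf] at h; exact ⟨none, fun _ => Or.inl ⟨rfl, h⟩⟩
          · rw [hcf] at h
            obtain ⟨r, hr⟩ := Finset.not_disjoint_iff.1 h
            exact ⟨some r, fun _ => Or.inr ⟨r, rfl, hr.1, hr.2⟩⟩
        · exact ⟨none, fun h => absurd h hf⟩
      choose φ hφ using hmap
      have hcardF : F.card ≤ d + 1 := by
        have hinj : Set.InjOn φ F := by
          intro f hf f' hf' hφeq
          by_contra hne
          have hfA : f ∈ A := (Finset.mem_filter.1 (by exact_mod_cast hf)).1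
          have hf'A : f' ∈ A := (Finset.mem_filter.1 (by exact_mod_cast hf')).1
          have hfN : f ∈ N := (Finset.mem_filter.1 hfA).1
          have hf'N : f' ∈ N := (Finset.mem_filter.1 hf'A).1
          obtain ⟨hne1, hdisj⟩ := hNind f hfN f' hf'N hne
          rcases hφ f (by exact_mod_cast hf) with ⟨h1', h2'⟩ | ⟨r, hr1, hr2, hr3⟩ <;>
            rcases hφ f' (by exact_mod_cast hf') with ⟨h1'', h2''⟩ | ⟨r', hr1', hr2', hr3'⟩
          · exact hne1 (h2' ▸ h2'')
          · rw [h1', hr1'] at hφeq; cases hφeq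
          · rw [hr1, h1''] at hφeq; cases hφeq
          · rw [hr1, hr1'] at hφeq
            have : r = r' := Option.some_injective _ hφeq
            subst this
            exact (Finset.disjoint_left.1 hdisj hr3) hr3'
        have hmaps : ∀ f ∈ F, φ f ∈ insert (none : Option R) (e.2.image some) := by
          intro f hf
          rcases hφ f hf with ⟨h1', _⟩ | ⟨r, hr1, hr2, _⟩
          · rw [h1']; exact Finset.mem_insert_self _ _
          · rw [hr1]; exact Finset.mem_insert_of_mem (Finset.mem_image_of_mem _ hr2)
        have := Finset.card_le_card_of_injOn φ hmaps hinj
        calc F.card ≤ (insert (none : Option R) (e.2.image some)).card := this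
          _ ≤ (e.2.image some).card + 1 := Finset.card_insert_le _ _
          _ ≤ e.2.card + 1 := by
              have := Finset.card_image_le (s := e.2) (f := some)
              omega
          _ ≤ d + 1 := by have := hE e (hME S heM); omega
      rw [hsum]
      have h0 : (0:ℝ) ≤ (w e : ℝ) := (w e).coe_nonneg
      have : (F.card : ℝ) ≤ (d : ℝ) + 1 := by exact_mod_cast hcardF
      nlinarith
    calc (∑ f ∈ A, (w f : ℝ)) ≤ ∑ f ∈ A, (w (c f) : ℝ) := h1
      _ = ∑ e ∈ M S, ∑ f ∈ A.filter (fun f => c f = e), (w (c f) : ℝ) := h2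
      _ ≤ ∑ e ∈ M S, (d + 1) * (w e : ℝ) := Finset.sum_le_sum h3
      _ = (d + 1) * ∑ e ∈ M S, (w e : ℝ) := by rw [Finset.mul_sum]
  -- probabilistic identity
  set coeff : Finset L → ℝ := fun S => p ^ S.card * (1 - p) ^ (Fintype.card L - S.card)
    with hcoeff
  have hcoeff_nonneg : ∀ S, 0 ≤ coeff S := fun S =>
    mul_nonneg (pow_nonneg hp0 _) (pow_nonneg (by linarith) _)
  have key : p * (ν : ℝ)
      = ∑ S : Finset L, coeff S * ∑ f ∈ N.filter (fun f => f.1 ∈ S), (w f : ℝ) := by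
    have step1 : p * (ν : ℝ) = ∑ f ∈ N, (w f : ℝ) * p := by
      rw [← Finset.sum_mul, mul_comm]
      congr 1
      rw [hNw]; push_cast; rfl
    rw [step1]
    have step2 : ∀ f ∈ N, (w f : ℝ) * p
        = ∑ S : Finset L, (if f.1 ∈ S then coeff S * (w f : ℝ) else 0) := by
      intro f _
      rw [← aux_cond_sum f.1 p, Finset.mul_sum]
      refine Finset.sum_congr rfl fun S _ => ?_
      by_cases h : f.1 ∈ S <;> simp [h, hcoeff, mul_comm]
    rw [Finset.sum_congr rfl step2, Finset.sum_comm]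
    refine Finset.sum_congr rfl fun S _ => ?_
    rw [Finset.sum_filter, Finset.mul_sum]
    refine Finset.sum_congr rfl fun f _ => ?_
    by_cases h : f.1 ∈ S <;> simp [h]
  have hW : ∀ S : Finset L, ((∑ e ∈ M S, w e : NNReal) : ℝ) = ∑ e ∈ M S, (w e : ℝ) := by
    intro S; push_cast; rfl
  have final : p * (ν : ℝ)
      ≤ ((d : ℝ) + 1) * ∑ S : Finset L, coeff S * ((∑ e ∈ M S, w e : NNReal) : ℝ) := by
    rw [key]
    calc ∑ S : Finset L, coeff S * ∑ f ∈ N.filter (fun f => f.1 ∈ S), (w f : ℝ)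
        ≤ ∑ S : Finset L, coeff S * (((d : ℝ) + 1) * ∑ e ∈ M S, (w e : ℝ)) :=
          Finset.sum_le_sum fun S _ =>
            mul_le_mul_of_nonneg_left (det S) (hcoeff_nonneg S)
      _ = ((d : ℝ) + 1) * ∑ S : Finset L, coeff S * ((∑ e ∈ M S, w e : NNReal) : ℝ) := by
          rw [Finset.mul_sum]
          refine Finset.sum_congr rfl fun S _ => ?_
          rw [hW]; ring
  have hd : (0 : ℝ) < (d : ℝ) + 1 := by positivity
  rw [div_mul_eq_mul_div, div_le_iff₀ hd]
  calc p * (ν : ℝ) ≤ ((d : ℝ) + 1) * ∑ S : Finset L, coeff S * ((∑ e ∈ M S, w e : NNReal) : ℝ) :=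
        final
    _ = (∑ S : Finset L, coeff S * ((∑ e ∈ M S, w e : NNReal) : ℝ)) * ((d : ℝ) + 1) := by ring
end
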